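/- Let γ: (-2ε,2ε) → E be piecewise C² (with corner at 0), let γ₊′(0) and γ₋′(0) denote the right-hand and left-hand derivatives of γ at 0, and let δ ∈ (0,ε]. Then for every t with |t| < δ/4, γ_δ is twice differentiable at t and γ_δ″(t) = ∫_ℝ γ″(t − (δ²/100)s) φ(s) ds + (γ₊′(0) − γ₋′(0)) · (100/δ²) · φ(100t/δ²). -/

import Mathlib

open MeasureTheory Set

/-- The variable mollification scale `σ_δ(t) = δ² σ(t/δ)`. -/
noncomputable def sigmaDel (σ : ℝ → ℝ) (δ t : ℝ) : ℝ := δ ^ 2 * σ (t / δ)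

/-- The variable-scale mollification `γ_δ(s) = ∫ γ(s - σ_δ(s) t) φ(t) dt` (Bochner integral). -/
noncomputable def mollify {E : Type*} [NormedAddCommGroup E] [NormedSpace ℝ E]
    (φ σ : ℝ → ℝ) (δ : ℝ) (γ : ℝ → E) (s : ℝ) : E :=
  ∫ t : ℝ, φ t • γ (s - sigmaDel σ δ s * t)

open Metric in
lemma cov_aux {E : Type*} [NormedAddCommGroup E] [NormedSpace ℝ E] [CompleteSpace E]
    (φ : ℝ → ℝ) (hφz : ∀ y, 1 < |y| → φ y = 0)
    {c : ℝ} (hc : 0 < c) (f : ℝ → E) {s A B : ℝ}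
    (hA : A < s - c) (hB : s + c ≤ B) :
    ∫ u : ℝ, φ u • f (s - c * u) = ∫ x in A..B, (c⁻¹ * φ ((s - x)/c)) • f x := by
  have hAB : A ≤ B := by linarith
  set K : ℝ → E := fun v => φ (v / c) • f (s - v) with hK
  have h1 : (fun u : ℝ => φ u • f (s - c * u)) = fun u => K (c * u) := by
    funext u
    simp [hK, mul_div_cancel_left₀ u hc.ne']
  rw [h1, Measure.integral_comp_mul_left K c]
  have h2 : ∫ v, K v = ∫ x, K (s - x) := (integral_sub_left_eq_self K volume s).symm
  have h3 : (fun x => K (s - x)) = fun x => φ ((s - x)/c) • f x := by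
    funext x; simp [hK, sub_sub_cancel]
  have h4 : |c⁻¹| • ∫ x, φ ((s - x)/c) • f x
      = ∫ x, (c⁻¹ * φ ((s - x)/c)) • f x := by
    rw [abs_of_pos (inv_pos.2 hc), ← integral_smul]
    congr 1; funext x; rw [smul_smul]
  rw [h2, h3, h4]
  have hsupp : ∀ x, x ∉ Ioc A B → (c⁻¹ * φ ((s - x)/c)) • f x = 0 := by
    intro x hx
    have : φ ((s - x)/c) = 0 := by
      apply hφz
      rw [abs_div, abs_of_pos hc, lt_div_iff₀ hc, one_mul]
      simp only [Set.mem_Ioc, not_and_or, not_lt, not_le] at hx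
      rcases hx with h | h
      · calc c < s - x := by linarith
          _ ≤ |s - x| := le_abs_self _
      · calc c < x - s := by linarith
          _ = -(s - x) := by ring
          _ ≤ |s - x| := neg_le_abs _
    simp [this]
  have hind : (fun x => (c⁻¹ * φ ((s - x)/c)) • f x)
      = Set.indicator (Ioc A B) (fun x => (c⁻¹ * φ ((s - x)/c)) • f x) := by
    funext x
    by_cases hx : x ∈ Ioc A B
    · simp [hx]
    · simp [hx, hsupp x hx]
  rw [intervalIntegral.integral_of_le hAB, ← MeasureTheory.integral_indicator measurableSet_Ioc,
    ← hind]

set_option maxHeartbeats 2000000 in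
open Metric in
lemma param_deriv {E : Type*} [NormedAddCommGroup E] [NormedSpace ℝ E] [CompleteSpace E]
    (ψ ψ' : ℝ → ℝ) (hψ : ∀ y, HasDerivAt ψ (ψ' y) y)
    (hψ'c : Continuous ψ') (Cb : ℝ) (hCb : ∀ y, |ψ' y| ≤ Cb)
    (f : ℝ → E) {A B : ℝ} (hf : ContinuousOn f (uIcc A B))
    (s : ℝ) :
    HasDerivAt (fun s => ∫ x in A..B, ψ (s - x) • f x) (∫ x in A..B, ψ' (s - x) • f x) s := by
  have hψc : Continuous ψ := by
    rw [continuous_iff_continuousAt]; exact fun y => (hψ y).continuousAt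
  have hmeas : ∀ (g : ℝ → ℝ) (x : ℝ), Continuous g →
      AEStronglyMeasurable (fun u => g (x - u) • f u) (volume.restrict (Set.uIoc A B)) := by
    intro g x hg
    apply ContinuousOn.aestronglyMeasurable _ measurableSet_uIoc
    exact ((hg.comp (continuous_const.sub continuous_id)).continuousOn).smul
      (hf.mono Ioc_subset_Icc_self)
  have hint : IntervalIntegrable (fun u => ψ (s - u) • f u) volume A B :=
    (((hψc.comp (continuous_const.sub continuous_id)).continuousOn).smul hf).intervalIntegrable
  have hbd : ∀ᵐ u ∂volume, u ∈ Set.uIoc A B → ∀ x ∈ ball s 1, ‖ψ' (x - u) • f u‖ ≤ Cb * ‖f u‖ := by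
    refine Filter.Eventually.of_forall fun u _ x _ => ?_
    rw [norm_smul]
    exact mul_le_mul_of_nonneg_right (hCb _) (norm_nonneg _)
  have hbint : IntervalIntegrable (fun u => Cb * ‖f u‖) volume A B :=
    (continuousOn_const.mul hf.norm).intervalIntegrable
  have hdiff : ∀ᵐ u ∂volume, u ∈ Set.uIoc A B → ∀ x ∈ ball s 1,
      HasDerivAt (fun x => ψ (x - u) • f u) (ψ' (x - u) • f u) x := by
    refine Filter.Eventually.of_forall fun u _ x _ => ?_
    have h1 : HasDerivAt (fun x : ℝ => ψ (x - u)) (ψ' (x - u)) x := by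
      simpa [Function.comp_def] using (hψ (x - u)).comp x ((hasDerivAt_id x).sub_const u)
    exact h1.smul_const (f u)
  exact (intervalIntegral.hasDerivAt_integral_of_dominated_loc_of_deriv_le (ball_mem_nhds s one_pos)
    (Filter.Eventually.of_forall fun x => hmeas ψ x hψc) hint (hmeas ψ' s hψ'c)
    hbd hbint hdiff).2

open Metric in
set_option maxHeartbeats 4000000 in
theorem mollify_second_deriv_near_corner
    {E : Type*} [NormedAddCommGroup E] [NormedSpace ℝ E] [CompleteSpace E]
    (ε : ℝ) (hε0 : 0 < ε) (hε1 : ε ≤ 1)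
    (φ σ : ℝ → ℝ)
    (hφsm : ContDiff ℝ (⊤ : ℕ∞) φ) (hφsupp : Function.support φ ⊆ Set.Icc (-1) 1)
    (hφ0 : ∀ t, 0 ≤ φ t) (hφ1 : ∀ t, φ t ≤ 1) (hφint : (∫ t : ℝ, φ t) = 1)
    (hσsm : ContDiff ℝ (⊤ : ℕ∞) σ) (hσsupp : Function.support σ ⊆ Set.Icc (-(1/2)) (1/2))
    (hσ0 : ∀ t, 0 ≤ σ t) (hσle : ∀ t, σ t ≤ 1/100)
    (hσeq : ∀ t : ℝ, |t| ≤ 1/4 → σ t = 1/100)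
    (hσpos : ∀ t : ℝ, 1/4 < |t| → |t| < 1/2 → 0 < σ t)
    (γ : ℝ → E)
    (hγcont : ContinuousOn γ (Set.Ioo (-(2*ε)) (2*ε)))
    (hγm : ContDiffOn ℝ 2 γ (Set.Ioc (-(2*ε)) 0))
    (hγp : ContDiffOn ℝ 2 γ (Set.Ico 0 (2*ε)))
    (γ' : ℝ → E)
    (hγ'1 : ∀ u ∈ Set.Ioo (-(2*ε)) (2*ε), u ≠ 0 → HasDerivAt γ (γ' u) u)
    (hγ'0 : HasDerivWithinAt γ (γ' 0) (Set.Ici 0) 0)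
    (γ'' : ℝ → E)
    (hγ''1 : ∀ u ∈ Set.Ioo (-(2*ε)) (2*ε), u ≠ 0 → HasDerivAt γ' (γ'' u) u)
    (hγ''0 : HasDerivWithinAt γ' (γ'' 0) (Set.Ici 0) 0)
    (vp vm : E)
    (hvp : HasDerivWithinAt γ vp (Set.Ici 0) 0)
    (hvm : HasDerivWithinAt γ vm (Set.Iic 0) 0)
    (δ : ℝ) (hδ0 : 0 < δ) (hδε : δ ≤ ε)
 :
    ∀ t : ℝ, |t| < δ/4 →
      HasDerivAt (deriv (mollify φ σ δ γ))
        ((∫ s : ℝ, φ s • γ'' (t - δ^2/100 * s)) +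
          ((100/δ^2) * φ (100 * t/δ^2)) • (vp - vm)) t := by
  intro t ht
  set c : ℝ := δ^2/100 with hc
  have hc0 : 0 < c := by positivity
  have hδ1 : δ ≤ 1 := hδε.trans hε1
  have hcle : c ≤ δ/100 := by
    rw [hc]; nlinarith
  set A : ℝ := -(δ/2) with hA
  set B : ℝ := δ/2 with hB
  have hAB : A ≤ B := by rw [hA, hB]; linarith
  have hA0 : A ≤ 0 := by rw [hA]; linarith
  have h0B : (0:ℝ) ≤ B := by rw [hB]; linarith
  have habs := abs_lt.mp ht
  have hAneg : -(2*ε) < A := by rw [hA]; linarith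
  have hB2ε : B < 2*ε := by rw [hB]; linarith
  have hsubIoo : Icc A B ⊆ Ioo (-(2*ε)) (2*ε) := fun x hx =>
    ⟨lt_of_lt_of_le hAneg hx.1, lt_of_le_of_lt hx.2 hB2ε⟩
  have hsub0B : Icc (0:ℝ) B ⊆ Ico 0 (2*ε) := fun x hx => ⟨hx.1, lt_of_le_of_lt hx.2 hB2ε⟩
  have hsubA0 : Icc A (0:ℝ) ⊆ Ioc (-(2*ε)) 0 := fun x hx => ⟨lt_of_lt_of_le hAneg hx.1, hx.2⟩
  -- φ facts
  have hφc : Continuous φ := hφsm.continuous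
  have hts : tsupport φ ⊆ Icc (-1) 1 := closure_minimal hφsupp isClosed_Icc
  have hts1 : tsupport (deriv φ) ⊆ Icc (-1) 1 :=
    (closure_minimal support_deriv_subset isClosed_closure).trans
      ((closure_minimal hφsupp isClosed_Icc))
  have hφz : ∀ y, 1 < |y| → φ y = 0 := by
    intro y hy
    by_contra h
    have hmem := hts (subset_closure (by simpa [Function.mem_support] using h))
    rw [mem_Icc] at hmem
    have := abs_le.mpr hmem; linarith
  have hφ1z : ∀ y, 1 < |y| → deriv φ y = 0 := by
    intro y hy
    by_contra h
    have hmem := hts1 (subset_closure (by simpa [Function.mem_support] using h))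
    rw [mem_Icc] at hmem
    have := abs_le.mpr hmem; linarith
  have hφ1sm : ContDiff ℝ (⊤ : ℕ∞) (deriv φ) := (contDiff_infty_iff_deriv.mp hφsm).2
  have hφ2c : Continuous (deriv (deriv φ)) := (contDiff_infty_iff_deriv.mp hφ1sm).2.continuous
  have hφd : ∀ z, HasDerivAt φ (deriv φ z) z := fun z =>
    (hφsm.differentiable (by simp) z).hasDerivAt
  have hφ1d : ∀ z, HasDerivAt (deriv φ) (deriv (deriv φ) z) z := fun z =>
    (hφ1sm.differentiable (by simp) z).hasDerivAt
  have hφcs : HasCompactSupport φ :=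
    HasCompactSupport.intro isCompact_Icc fun x hx => by
      by_contra h; exact hx (hφsupp h)
  -- the rescaled mollifier and its derivatives
  set ψ : ℝ → ℝ := fun y => c⁻¹ * φ (y / c) with hψdef
  set ψ1 : ℝ → ℝ := fun y => c⁻¹ * (deriv φ (y / c) * (1 / c)) with hψ1def
  set ψ2 : ℝ → ℝ := fun y => c⁻¹ * (deriv (deriv φ) (y / c) * (1 / c) * (1 / c)) with hψ2def
  have hψd : ∀ y, HasDerivAt ψ (ψ1 y) y := by
    intro y
    have h := ((hφd (y/c)).comp y ((hasDerivAt_id y).div_const c)).const_mul c⁻¹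
    simpa [Function.comp_def, hψdef, hψ1def] using h
  have hψ1d : ∀ y, HasDerivAt ψ1 (ψ2 y) y := by
    intro y
    have h := (((hφ1d (y/c)).comp y
      ((hasDerivAt_id y).div_const c)).mul_const (1/c)).const_mul c⁻¹
    simpa [Function.comp_def, hψ1def, hψ2def] using h
  have hψc : Continuous ψ :=
    continuous_const.mul (hφc.comp (continuous_id.div_const c))
  have hψ1c : Continuous ψ1 :=
    continuous_const.mul ((hφ1sm.continuous.comp (continuous_id.div_const c)).mul continuous_const)
  have hψ2c : Continuous ψ2 :=
    continuous_const.mul (((hφ2c.comp (continuous_id.div_const c)).mul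
      continuous_const).mul continuous_const)
  have habsdiv : ∀ y : ℝ, c < |y| → 1 < |y / c| := by
    intro y hy
    rw [abs_div, abs_of_pos hc0]
    rw [lt_div_iff₀ hc0, one_mul]; exact hy
  have hψz : ∀ y, c < |y| → ψ y = 0 := by
    intro y hy; rw [hψdef]; simp [hφz _ (habsdiv y hy)]
  have hψ1z : ∀ y, c < |y| → ψ1 y = 0 := by
    intro y hy; rw [hψ1def]; simp [hφ1z _ (habsdiv y hy)]
  -- bounds for ψ1 and ψ2
  obtain ⟨C1, hC1⟩ := (hφcs.deriv).exists_bound_of_continuous hφ1sm.continuous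
  obtain ⟨C2, hC2⟩ := (hφcs.deriv.deriv).exists_bound_of_continuous hφ2c
  have hC1' : ∀ y, |deriv φ y| ≤ C1 := by simpa [Real.norm_eq_abs] using hC1
  have hC2' : ∀ y, |deriv (deriv φ) y| ≤ C2 := by simpa [Real.norm_eq_abs] using hC2
  have hCb1 : ∀ y, |ψ1 y| ≤ c⁻¹ * (C1 * (1/c)) := by
    intro y
    rw [hψ1def]
    simp only []
    rw [abs_mul, abs_mul, abs_of_pos (inv_pos.2 hc0), abs_of_pos (by positivity : (0:ℝ) < 1/c)]
    have h0 := (abs_nonneg (deriv φ (y/c))).trans (hC1' (y/c))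
    gcongr
    exact hC1' _
  have hCb2 : ∀ y, |ψ2 y| ≤ c⁻¹ * (C2 * (1/c) * (1/c)) := by
    intro y
    rw [hψ2def]
    simp only []
    rw [abs_mul, abs_mul, abs_mul, abs_of_pos (inv_pos.2 hc0),
      abs_of_pos (by positivity : (0:ℝ) < 1/c)]
    have h0 := (abs_nonneg (deriv (deriv φ) (y/c))).trans (hC2' (y/c))
    gcongr
    exact hC2' _
  -- continuity of γ on [A,B]
  have hγu : ContinuousOn γ (uIcc A B) := by
    rw [uIcc_of_le hAB]; exact hγcont.mono hsubIoo
  have h2ε0 : (0:ℝ) < 2*ε := by linarith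
  -- the right one-sided derivatives
  have udr : UniqueDiffOn ℝ (Ico (0:ℝ) (2*ε)) := uniqueDiffOn_Ico 0 (2*ε)
  have udl : UniqueDiffOn ℝ (Ioc (-(2*ε)) 0) := uniqueDiffOn_Ioc (-(2*ε)) 0
  have h0mem : (0:ℝ) ∈ Ico (0:ℝ) (2*ε) := ⟨le_refl 0, h2ε0⟩
  have h0meml : (0:ℝ) ∈ Ioc (-(2*ε)) (0:ℝ) := ⟨by linarith, le_refl 0⟩
  set Dr : ℝ → E := derivWithin γ (Ico 0 (2*ε)) with hDrdef
  set Dl : ℝ → E := derivWithin γ (Ioc (-(2*ε)) 0) with hDldef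
  set Dr2 : ℝ → E := derivWithin Dr (Ico 0 (2*ε)) with hDr2def
  set Dl2 : ℝ → E := derivWithin Dl (Ioc (-(2*ε)) 0) with hDl2def
  have hDr_eq : ∀ x ∈ Ico (0:ℝ) (2*ε), Dr x = γ' x := by
    intro x hx
    rcases eq_or_lt_of_le hx.1 with h0 | h0
    · rw [← h0]
      exact (hγ'0.mono Ico_subset_Ici_self).derivWithin (udr 0 h0mem)
    · have hxIoo : x ∈ Ioo (-(2*ε)) (2*ε) := ⟨by linarith [hx.1], hx.2⟩
      exact ((hγ'1 x hxIoo (ne_of_gt h0)).hasDerivWithinAt).derivWithin (udr x hx)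
  have hDr0 : Dr 0 = vp := (hvp.mono Ico_subset_Ici_self).derivWithin (udr 0 h0mem)
  have hγ'0vp : γ' 0 = vp := by rw [← hDr_eq 0 h0mem, hDr0]
  have hDl_eq : ∀ x ∈ Ioo (-(2*ε)) (0:ℝ), Dl x = γ' x := by
    intro x hx
    have hxIoo : x ∈ Ioo (-(2*ε)) (2*ε) := ⟨hx.1, by linarith [hx.2]⟩
    exact ((hγ'1 x hxIoo (ne_of_lt hx.2)).hasDerivWithinAt).derivWithin
      (udl x ⟨hx.1, le_of_lt hx.2⟩)
  have hDl0 : Dl 0 = vm := (hvm.mono Ioc_subset_Iic_self).derivWithin (udl 0 h0meml)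
  have hDr1 : ContDiffOn ℝ 1 Dr (Ico 0 (2*ε)) := hγp.derivWithin udr (by norm_num)
  have hDl1 : ContDiffOn ℝ 1 Dl (Ioc (-(2*ε)) 0) := hγm.derivWithin udl (by norm_num)
  have hDrc : ContinuousOn Dr (Ico 0 (2*ε)) := hDr1.continuousOn
  have hDlc : ContinuousOn Dl (Ioc (-(2*ε)) 0) := hDl1.continuousOn
  have hDr2c : ContinuousOn Dr2 (Ico 0 (2*ε)) := hDr1.continuousOn_derivWithin udr le_rfl
  have hDl2c : ContinuousOn Dl2 (Ioc (-(2*ε)) 0) := hDl1.continuousOn_derivWithin udl le_rfl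
  have hDrD : ∀ x ∈ Ioo (0:ℝ) (2*ε), HasDerivAt Dr (γ'' x) x := by
    intro x hx
    have hxIoo : x ∈ Ioo (-(2*ε)) (2*ε) := ⟨by linarith [hx.1], hx.2⟩
    have hev : Dr =ᶠ[nhds x] γ' :=
      Filter.eventuallyEq_of_mem (isOpen_Ioo.mem_nhds hx)
        (fun y hy => hDr_eq y ⟨le_of_lt hy.1, hy.2⟩)
    exact (hγ''1 x hxIoo (ne_of_gt hx.1)).congr_of_eventuallyEq hev
  have hDlD : ∀ x ∈ Ioo (-(2*ε)) (0:ℝ), HasDerivAt Dl (γ'' x) x := by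
    intro x hx
    have hxIoo : x ∈ Ioo (-(2*ε)) (2*ε) := ⟨hx.1, by linarith [hx.2]⟩
    have hev : Dl =ᶠ[nhds x] γ' :=
      Filter.eventuallyEq_of_mem (isOpen_Ioo.mem_nhds hx) (fun y hy => hDl_eq y hy)
    exact (hγ''1 x hxIoo (ne_of_lt hx.2)).congr_of_eventuallyEq hev
  have hDr2_eq : ∀ x ∈ Ico (0:ℝ) (2*ε), Dr2 x = γ'' x := by
    intro x hx
    rcases eq_or_lt_of_le hx.1 with h0 | h0
    · rw [← h0]
      have h1 : HasDerivWithinAt Dr (γ'' 0) (Ico 0 (2*ε)) 0 := by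
        refine ((hγ''0.mono Ico_subset_Ici_self).congr ?_ ?_)
        · intro y hy; exact hDr_eq y hy
        · rw [hDr0, hγ'0vp]
      exact h1.derivWithin (udr 0 h0mem)
    · exact ((hDrD x ⟨h0, hx.2⟩).hasDerivWithinAt).derivWithin (udr x hx)
  have hDl2_eq : ∀ x ∈ Ioo (-(2*ε)) (0:ℝ), Dl2 x = γ'' x := by
    intro x hx
    exact ((hDlD x hx).hasDerivWithinAt).derivWithin (udl x ⟨hx.1, le_of_lt hx.2⟩)
  have hDrD2 : ∀ x ∈ Ioo (0:ℝ) (2*ε), HasDerivAt Dr (Dr2 x) x := by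
    intro x hx
    rw [hDr2_eq x ⟨le_of_lt hx.1, hx.2⟩]; exact hDrD x hx
  have hDlD2 : ∀ x ∈ Ioo (-(2*ε)) (0:ℝ), HasDerivAt Dl (Dl2 x) x := by
    intro x hx
    rw [hDl2_eq x hx]; exact hDlD x hx
  -- derivative of x ↦ ψ (t - x) etc.
  have hψt : ∀ x : ℝ, HasDerivAt (fun x => ψ (t - x)) (-ψ1 (t - x)) x := by
    intro x
    have h := (hψd (t - x)).comp x ((hasDerivAt_id x).const_sub t)
    simpa [Function.comp_def] using h
  have hψ1t : ∀ x : ℝ, HasDerivAt (fun x => ψ1 (t - x)) (-ψ2 (t - x)) x := by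
    intro x
    have h := (hψ1d (t - x)).comp x ((hasDerivAt_id x).const_sub t)
    simpa [Function.comp_def] using h
  have hsub0BIoo : Icc (0:ℝ) B ⊆ Ioo (-(2*ε)) (2*ε) := fun x hx =>
    hsubIoo ⟨le_trans hA0 hx.1, hx.2⟩
  have hsubA0Ioo : Icc A (0:ℝ) ⊆ Ioo (-(2*ε)) (2*ε) := fun x hx =>
    hsubIoo ⟨hx.1, le_trans hx.2 h0B⟩
  have hcontsub : Continuous (fun x : ℝ => t - x) := continuous_const.sub continuous_id
  -- FTC on [0, B]
  set wr : ℝ → E := fun x => -(ψ1 (t - x) • γ x + ψ (t - x) • Dr x) with hwrdef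
  have hwrc : ContinuousOn wr (Icc 0 B) := by
    apply ContinuousOn.neg
    apply ContinuousOn.add
    · exact ((hψ1c.comp hcontsub).continuousOn).smul (hγcont.mono hsub0BIoo)
    · exact ((hψc.comp hcontsub).continuousOn).smul (hDrc.mono hsub0B)
  have hwrd : ∀ x ∈ Ioo (0:ℝ) B,
      HasDerivAt wr (ψ2 (t - x) • γ x - ψ (t - x) • Dr2 x) x := by
    intro x hx
    have hx2ε : x ∈ Ioo (0:ℝ) (2*ε) := ⟨hx.1, lt_trans hx.2 hB2ε⟩
    have hxIoo : x ∈ Ioo (-(2*ε)) (2*ε) := ⟨by linarith [hx.1], hx2ε.2⟩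
    have hγx : HasDerivAt γ (γ' x) x := hγ'1 x hxIoo (ne_of_gt hx.1)
    have hdr := hDrD2 x hx2ε
    have d1 := (hψ1t x).smul hγx
    have d2 := (hψt x).smul hdr
    have d3 := (d1.add d2).neg
    convert d3 using 1
    · rfl
    rw [hDr_eq x ⟨le_of_lt hx2ε.1, hx2ε.2⟩]
    module
  have hIr1 : IntervalIntegrable (fun x => ψ2 (t - x) • γ x) volume 0 B := by
    apply ContinuousOn.intervalIntegrable
    rw [uIcc_of_le h0B]
    exact ((hψ2c.comp hcontsub).continuousOn).smul (hγcont.mono hsub0BIoo)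
  have hIr2 : IntervalIntegrable (fun x => ψ (t - x) • Dr2 x) volume 0 B := by
    apply ContinuousOn.intervalIntegrable
    rw [uIcc_of_le h0B]
    exact ((hψc.comp hcontsub).continuousOn).smul (hDr2c.mono hsub0B)
  have hftcr : ∫ x in (0:ℝ)..B, (ψ2 (t - x) • γ x - ψ (t - x) • Dr2 x) = wr B - wr 0 :=
    intervalIntegral.integral_eq_sub_of_hasDeriv_right_of_le h0B hwrc
      (fun x hx => (hwrd x hx).hasDerivWithinAt) (hIr1.sub hIr2)
  have htBc : c < |t - B| := by
    have h1 : t - B < 0 := by rw [hB]; linarith [habs.2]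
    rw [abs_of_neg h1, hB]
    linarith [habs.2, hcle]
  have htAc : c < |t - A| := by
    have h1 : 0 < t - A := by rw [hA, hB]; linarith [habs.1]
    rw [abs_of_pos h1, hA, hB]
    linarith [habs.1, hcle]
  have hwrB : wr B = 0 := by
    rw [hwrdef]
    simp only []
    rw [hψz _ htBc, hψ1z _ htBc]
    simp
  have hwr0 : wr 0 = -(ψ1 t • γ 0 + ψ t • vp) := by
    rw [hwrdef]
    simp only [sub_zero]
    rw [hDr0]
  have hrearr_r : ∫ x in (0:ℝ)..B, ψ2 (t - x) • γ x
      = (ψ1 t • γ 0 + ψ t • vp) + ∫ x in (0:ℝ)..B, ψ (t - x) • Dr2 x := by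
    have h := intervalIntegral.integral_sub hIr1 hIr2
    rw [hftcr, hwrB, hwr0] at h
    have h2 : (∫ x in (0:ℝ)..B, ψ2 (t - x) • γ x) - (∫ x in (0:ℝ)..B, ψ (t - x) • Dr2 x)
        = ψ1 t • γ 0 + ψ t • vp := by rw [← h]; abel
    exact sub_eq_iff_eq_add.mp h2
  -- FTC on [A, 0]
  set wl : ℝ → E := fun x => -(ψ1 (t - x) • γ x + ψ (t - x) • Dl x) with hwldef
  have hwlc : ContinuousOn wl (Icc A 0) := by
    apply ContinuousOn.neg
    apply ContinuousOn.add
    · exact ((hψ1c.comp hcontsub).continuousOn).smul (hγcont.mono hsubA0Ioo)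
    · exact ((hψc.comp hcontsub).continuousOn).smul (hDlc.mono hsubA0)
  have hwld : ∀ x ∈ Ioo A (0:ℝ),
      HasDerivAt wl (ψ2 (t - x) • γ x - ψ (t - x) • Dl2 x) x := by
    intro x hx
    have hxIon : x ∈ Ioo (-(2*ε)) (0:ℝ) := ⟨lt_trans hAneg hx.1, hx.2⟩
    have hxIoo : x ∈ Ioo (-(2*ε)) (2*ε) := ⟨hxIon.1, by linarith [hx.2]⟩
    have hγx : HasDerivAt γ (γ' x) x := hγ'1 x hxIoo (ne_of_lt hx.2)
    have hdl := hDlD2 x hxIon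
    have d1 := (hψ1t x).smul hγx
    have d2 := (hψt x).smul hdl
    have d3 := (d1.add d2).neg
    convert d3 using 1
    · rfl
    rw [hDl_eq x hxIon]
    module
  have hIl1 : IntervalIntegrable (fun x => ψ2 (t - x) • γ x) volume A 0 := by
    apply ContinuousOn.intervalIntegrable
    rw [uIcc_of_le hA0]
    exact ((hψ2c.comp hcontsub).continuousOn).smul (hγcont.mono hsubA0Ioo)
  have hIl2 : IntervalIntegrable (fun x => ψ (t - x) • Dl2 x) volume A 0 := by
    apply ContinuousOn.intervalIntegrable
    rw [uIcc_of_le hA0]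
    exact ((hψc.comp hcontsub).continuousOn).smul (hDl2c.mono hsubA0)
  have hftcl : ∫ x in A..(0:ℝ), (ψ2 (t - x) • γ x - ψ (t - x) • Dl2 x) = wl 0 - wl A :=
    intervalIntegral.integral_eq_sub_of_hasDeriv_right_of_le hA0 hwlc
      (fun x hx => (hwld x hx).hasDerivWithinAt) (hIl1.sub hIl2)
  have hwlA : wl A = 0 := by
    rw [hwldef]
    simp only []
    rw [hψz _ htAc, hψ1z _ htAc]
    simp
  have hwl0 : wl 0 = -(ψ1 t • γ 0 + ψ t • vm) := by
    rw [hwldef]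
    simp only [sub_zero]
    rw [hDl0]
  have hrearr_l : ∫ x in A..(0:ℝ), ψ2 (t - x) • γ x
      = (-(ψ1 t • γ 0 + ψ t • vm)) + ∫ x in A..(0:ℝ), ψ (t - x) • Dl2 x := by
    have h := intervalIntegral.integral_sub hIl1 hIl2
    rw [hftcl, hwlA, hwl0] at h
    have h2 : (∫ x in A..(0:ℝ), ψ2 (t - x) • γ x) - (∫ x in A..(0:ℝ), ψ (t - x) • Dl2 x)
        = -(ψ1 t • γ 0 + ψ t • vm) := by rw [← h]; abel
    exact sub_eq_iff_eq_add.mp h2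
  -- replace Dr2 / Dl2 by γ''
  have hcr : (∫ x in (0:ℝ)..B, ψ (t - x) • Dr2 x) = ∫ x in (0:ℝ)..B, ψ (t - x) • γ'' x := by
    apply intervalIntegral.integral_congr
    intro x hx
    rw [uIcc_of_le h0B] at hx
    show ψ (t - x) • Dr2 x = ψ (t - x) • γ'' x
    rw [hDr2_eq x (hsub0B hx)]
  have hne : ∀ᵐ x : ℝ ∂volume, x ≠ (0:ℝ) := by
    rw [ae_iff]
    have hs : {x : ℝ | ¬ x ≠ 0} = {0} := by ext y; simp
    rw [hs]
    exact measure_singleton 0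
  have hcl : (∫ x in A..(0:ℝ), ψ (t - x) • Dl2 x) = ∫ x in A..(0:ℝ), ψ (t - x) • γ'' x := by
    apply intervalIntegral.integral_congr_ae
    filter_upwards [hne] with x hx0 hxmem
    rw [uIoc_of_le hA0] at hxmem
    have hxIon : x ∈ Ioo (-(2*ε)) (0:ℝ) :=
      ⟨lt_trans hAneg hxmem.1, lt_of_le_of_ne hxmem.2 hx0⟩
    show ψ (t - x) • Dl2 x = ψ (t - x) • γ'' x
    rw [hDl2_eq x hxIon]
  -- integrability of the γ'' integrands and recombination
  have hIg''r : IntervalIntegrable (fun x => ψ (t - x) • γ'' x) volume 0 B := by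
    apply ContinuousOn.intervalIntegrable
    rw [uIcc_of_le h0B]
    apply ContinuousOn.smul ((hψc.comp hcontsub).continuousOn)
    exact (hDr2c.mono hsub0B).congr (fun x hx => (hDr2_eq x (hsub0B hx)).symm)
  have hIg''l : IntervalIntegrable (fun x => ψ (t - x) • γ'' x) volume A 0 := by
    apply hIl2.congr_ae
    filter_upwards [ae_restrict_of_ae hne,
      ae_restrict_mem (measurableSet_uIoc : MeasurableSet (Set.uIoc A 0))] with x hx0 hxmem
    rw [uIoc_of_le hA0] at hxmem
    have hxIon : x ∈ Ioo (-(2*ε)) (0:ℝ) :=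
      ⟨lt_trans hAneg hxmem.1, lt_of_le_of_ne hxmem.2 hx0⟩
    show ψ (t - x) • Dl2 x = ψ (t - x) • γ'' x
    rw [hDl2_eq x hxIon]
  have hJ : (∫ x in A..(0:ℝ), ψ (t - x) • γ'' x) + (∫ x in (0:ℝ)..B, ψ (t - x) • γ'' x)
      = ∫ x in A..B, ψ (t - x) • γ'' x :=
    intervalIntegral.integral_add_adjacent_intervals hIg''l hIg''r
  have hsplit : (∫ x in A..B, ψ2 (t - x) • γ x)
      = (∫ x in A..(0:ℝ), ψ2 (t - x) • γ x) + ∫ x in (0:ℝ)..B, ψ2 (t - x) • γ x :=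
    (intervalIntegral.integral_add_adjacent_intervals hIl1 hIr1).symm
  -- change of variables for the γ'' integral
  have hAt : A < t - c := by rw [hA, hB]; linarith [habs.1, hcle]
  have htBa : t + c ≤ B := by rw [hB]; linarith [habs.2, hcle]
  have hCov2 : (∫ s : ℝ, φ s • γ'' (t - c * s)) = ∫ x in A..B, ψ (t - x) • γ'' x :=
    cov_aux φ hφz hc0 γ'' hAt htBa
  -- the mollification near t
  have hball : ∀ s ∈ ball (0:ℝ) (δ/4), mollify φ σ δ γ s = ∫ x in A..B, ψ (s - x) • γ x := by
    intro s hs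
    have hs4 : |s| < δ/4 := by
      rw [mem_ball_zero_iff, Real.norm_eq_abs] at hs; exact hs
    have hsabs := abs_lt.mp hs4
    have hsig : sigmaDel σ δ s = c := by
      have habs' : |s/δ| ≤ 1/4 := by
        rw [abs_div, abs_of_pos hδ0, div_le_iff₀ hδ0]
        linarith
      show δ^2 * σ (s/δ) = c
      rw [hσeq _ habs', hc]; ring
    show (∫ u : ℝ, φ u • γ (s - sigmaDel σ δ s * u)) = _
    rw [hsig]
    have hAs : A < s - c := by rw [hA, hB]; linarith [hcle]
    have hsB : s + c ≤ B := by rw [hB]; linarith [hcle]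
    exact cov_aux φ hφz hc0 γ hAs hsB
  have htball : t ∈ ball (0:ℝ) (δ/4) := by
    rw [mem_ball_zero_iff, Real.norm_eq_abs]; exact ht
  have hMG : mollify φ σ δ γ =ᶠ[nhds t] (fun s => ∫ x in A..B, ψ (s - x) • γ x) :=
    Filter.eventuallyEq_of_mem (Metric.isOpen_ball.mem_nhds htball) hball
  have hG : ∀ s, HasDerivAt (fun s => ∫ x in A..B, ψ (s - x) • γ x)
      (∫ x in A..B, ψ1 (s - x) • γ x) s :=
    fun s => param_deriv ψ ψ1 hψd hψ1c _ hCb1 γ hγu s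
  have hG2 : HasDerivAt (fun s => ∫ x in A..B, ψ1 (s - x) • γ x)
      (∫ x in A..B, ψ2 (t - x) • γ x) t :=
    param_deriv ψ1 ψ2 hψ1d hψ2c _ hCb2 γ hγu t
  have hder : deriv (mollify φ σ δ γ) =ᶠ[nhds t]
      (fun s => ∫ x in A..B, ψ1 (s - x) • γ x) := by
    filter_upwards [hMG.deriv] with s hs
    rw [hs, (hG s).deriv]
  have key : HasDerivAt (deriv (mollify φ σ δ γ)) (∫ x in A..B, ψ2 (t - x) • γ x) t :=
    hG2.congr_of_eventuallyEq hder
  -- final bookkeeping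
  have h100 : (100/δ^2) * φ (100 * t/δ^2) = ψ t := by
    show _ = c⁻¹ * φ (t / c)
    rw [hc, inv_div]
    congr 2
    field_simp
  have heq : (∫ x in A..B, ψ2 (t - x) • γ x)
      = (∫ s : ℝ, φ s • γ'' (t - c * s)) + (ψ t) • (vp - vm) := by
    rw [hsplit, hrearr_l, hrearr_r, hcl, hcr, hCov2, ← hJ, smul_sub]
    abel
  rw [h100, ← heq]
  exact key
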